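/- Let T be a trivial 3-cutset of G, with {a} a connected component of G − T. If T is subordinated both to a 3-cutset S and to a 3-cutset S′, then S = S′; that is, a trivial cutset can be subordinated to at most one cutset. -/

import Mathlib

namespace Paper

variable {V : Type*}

/-- `S ⊆ V(G)` is a cutset of `G`: the graph `G − S` is disconnected. -/
def IsCutset (G : SimpleGraph V) (S : Set V) : Prop :=
  ¬ (G.induce (Sᶜ : Set V)).Connected

/-- A 3-cutset: a cutset of exactly 3 vertices. -/
def IsThreeCutset (G : SimpleGraph V) (S : Set V) : Prop :=
  S.ncard = 3 ∧ IsCutset G S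

/-- `G` is triconnected: at least 4 vertices and deleting any at most 2 vertices
leaves a connected graph. -/
def IsTriconnected [Fintype V] (G : SimpleGraph V) : Prop :=
  4 ≤ Fintype.card V ∧
    ∀ X : Set V, X.ncard ≤ 2 → (G.induce (Xᶜ : Set V)).Connected

/-- `x` and `y` both survive the deletion of `R` and lie in the same connected
component of `G − R`. -/
def ReachOutside (G : SimpleGraph V) (R : Set V) (x y : V) : Prop :=
  ∃ (hx : x ∈ (Rᶜ : Set V)) (hy : y ∈ (Rᶜ : Set V)),
    (G.induce (Rᶜ : Set V)).Reachable ⟨x, hx⟩ ⟨y, hy⟩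

/-- `R` splits `X`: two vertices of `X \ R` lie in different connected components
of `G − R`. -/
def Splits (G : SimpleGraph V) (R X : Set V) : Prop :=
  ∃ x ∈ X, ∃ y ∈ X, x ∉ R ∧ y ∉ R ∧ ¬ ReachOutside G R x y

/-- Two 3-cutsets are dependent iff one splits the other. -/
def Dependent (G : SimpleGraph V) (S T : Set V) : Prop :=
  Splits G S T ∨ Splits G T S

/-- The connected component of `G − R` containing `u` (empty if `u ∈ R`). -/
def compOutside (G : SimpleGraph V) (R : Set V) (u : V) : Set V :=
  {y | ReachOutside G R u y}

/-- `C` is a connected component of `G − R`. -/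
def IsCompOutside (G : SimpleGraph V) (R : Set V) (C : Set V) : Prop :=
  ∃ u, u ∉ R ∧ C = compOutside G R u

/-! ### Auxiliary machinery -/

/-- Reachability in `G` by a walk all of whose vertices avoid `R`. -/
def ReachAvoid (G : SimpleGraph V) (R : Set V) (x y : V) : Prop :=
  ∃ w : G.Walk x y, ∀ z ∈ w.support, z ∉ R

namespace ReachAvoid

variable {G : SimpleGraph V} {R R' : Set V} {x y z : V}

lemma not_left (h : ReachAvoid G R x y) : x ∉ R := by
  obtain ⟨w, hw⟩ := h; exact hw x w.start_mem_support

lemma not_right (h : ReachAvoid G R x y) : y ∉ R := by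
  obtain ⟨w, hw⟩ := h; exact hw y w.end_mem_support

lemma refl (hx : x ∉ R) : ReachAvoid G R x x :=
  ⟨SimpleGraph.Walk.nil, by simp [hx]⟩

lemma symm (h : ReachAvoid G R x y) : ReachAvoid G R y x := by
  obtain ⟨w, hw⟩ := h
  exact ⟨w.reverse, by simpa using hw⟩

lemma trans (h : ReachAvoid G R x y) (h' : ReachAvoid G R y z) : ReachAvoid G R x z := by
  obtain ⟨w, hw⟩ := h; obtain ⟨w', hw'⟩ := h'
  refine ⟨w.append w', ?_⟩
  intro u hu
  rcases (SimpleGraph.Walk.mem_support_append_iff _ _).mp hu with h | h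
  · exact hw u h
  · exact hw' u h

lemma of_adj (h : G.Adj x y) (hx : x ∉ R) (hy : y ∉ R) : ReachAvoid G R x y :=
  ⟨h.toWalk, by simp [hx, hy]⟩

lemma mono (hsub : R' ⊆ R) (h : ReachAvoid G R x y) : ReachAvoid G R' x y := by
  obtain ⟨w, hw⟩ := h
  exact ⟨w, fun z hz hzR' => hw z hz (hsub hzR')⟩

end ReachAvoid

lemma reachAvoid_of_walk_induce {G : SimpleGraph V} {R : Set V} :
    ∀ {x y : (Rᶜ : Set V)}, (G.induce (Rᶜ : Set V)).Walk x y → ReachAvoid G R (x : V) (y : V) := by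
  intro x y w
  refine ⟨w.map (SimpleGraph.Embedding.induce (Rᶜ : Set V)).toHom, ?_⟩
  intro z hz
  have hz2 : z ∈ (w.map (SimpleGraph.Embedding.induce (Rᶜ : Set V)).toHom).support := hz
  rw [SimpleGraph.Walk.support_map] at hz2
  obtain ⟨⟨z', hz'⟩, _, rfl⟩ := List.mem_map.mp hz2
  exact hz'

lemma reachOutside_of_reachAvoid {G : SimpleGraph V} {R : Set V} :
    ∀ {x y : V}, ReachAvoid G R x y → ReachOutside G R x y := by
  rintro x y ⟨w, hw⟩
  induction w with
  | nil => exact ⟨hw _ (by simp), hw _ (by simp), SimpleGraph.Reachable.refl _⟩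
  | @cons u v q h p ih =>
      have hu : u ∉ R := hw u (by simp)
      have hv : v ∉ R := hw v (by simp)
      obtain ⟨hv', hq', hr⟩ := ih (fun z hz => hw z (by simp [hz]))
      have hadj : (G.induce (Rᶜ : Set V)).Adj ⟨u, hu⟩ ⟨v, hv⟩ := by
        simpa using h
      exact ⟨hu, hq', (hadj.reachable).trans hr⟩

lemma reachOutside_iff {G : SimpleGraph V} {R : Set V} {x y : V} :
    ReachOutside G R x y ↔ ReachAvoid G R x y := by
  constructor
  · rintro ⟨hx, hy, hr⟩
    exact hr.elim fun w => reachAvoid_of_walk_induce w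
  · exact reachOutside_of_reachAvoid

lemma reachOutside_symm {G : SimpleGraph V} {R : Set V} {x y : V}
    (h : ReachOutside G R x y) : ReachOutside G R y x := by
  obtain ⟨hx, hy, hr⟩ := h; exact ⟨hy, hx, hr.symm⟩

lemma reachOutside_trans {G : SimpleGraph V} {R : Set V} {x y z : V}
    (h : ReachOutside G R x y) (h' : ReachOutside G R y z) : ReachOutside G R x z := by
  obtain ⟨hx, hy, hr⟩ := h; obtain ⟨hy', hz, hr'⟩ := h'
  exact ⟨hx, hz, hr.trans hr'⟩

lemma reachOutside_not_left {G : SimpleGraph V} {R : Set V} {x y : V}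
    (h : ReachOutside G R x y) : x ∉ R := by
  obtain ⟨hx, _, _⟩ := h; exact hx

lemma reachOutside_not_right {G : SimpleGraph V} {R : Set V} {x y : V}
    (h : ReachOutside G R x y) : y ∉ R := by
  obtain ⟨_, hy, _⟩ := h; exact hy

/-- If `A` is closed under adjacency modulo `R`, every vertex of a walk from
a vertex of `A` avoiding `R` lies in `A`. -/
lemma walk_support_subset {G : SimpleGraph V} {R A : Set V}
    (hA : ∀ z ∈ A, ∀ z', G.Adj z z' → z' ∈ R ∨ z' ∈ A) :
    ∀ {x y : V} (w : G.Walk x y), (∀ z ∈ w.support, z ∉ R) → x ∈ A →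
      ∀ z ∈ w.support, z ∈ A := by
  intro x y w
  induction w with
  | nil => intro _ hx z hz; simp at hz; subst hz; exact hx
  | @cons u v q h p ih =>
      intro hsup hx z hz
      have hv : v ∈ A := by
        rcases hA u hx v h with hr | hr
        · exact absurd hr (hsup v (by simp))
        · exact hr
      rcases List.mem_cons.mp (by simpa using hz) with rfl | hz'
      · exact hx
      · exact ih (fun z hz => hsup z (by simp [hz])) hv z hz'

lemma reachAvoid_closure {G : SimpleGraph V} {R A : Set V}
    (hA : ∀ z ∈ A, ∀ z', G.Adj z z' → z' ∈ R ∨ z' ∈ A)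
    {x y : V} (h : ReachAvoid G R x y) (hx : x ∈ A) : y ∈ A := by
  obtain ⟨w, hw⟩ := h
  exact walk_support_subset hA w hw hx y w.end_mem_support

/-- The component of `p` in `G − S` is closed under adjacency modulo `S`. -/
lemma comp_closed {G : SimpleGraph V} {S : Set V} {p : V} :
    ∀ z ∈ {z | ReachOutside G S p z}, ∀ z', G.Adj z z' →
      z' ∈ S ∨ z' ∈ {z | ReachOutside G S p z} := by
  intro z hz z' hadj
  by_cases hz' : z' ∈ S
  · exact Or.inl hz'
  · refine Or.inr (reachOutside_trans hz ?_)
    exact reachOutside_of_reachAvoid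
      (ReachAvoid.of_adj hadj (reachOutside_not_right hz) hz')

/-- Each of the three components of `G − S` contains exactly one vertex of `T`. -/
lemma key_sep {G : SimpleGraph V} {S T : Set V} (hT : T.ncard = 3)
    (h3 : Nat.card (G.induce (Sᶜ : Set V)).ConnectedComponent = 3)
    (hr : ∀ u, u ∉ S → ∃ t ∈ T, ReachOutside G S u t) :
    (∀ t ∈ T, t ∉ S) ∧ ∀ t ∈ T, ∀ t' ∈ T, t ≠ t' → ¬ ReachOutside G S t t' := by
  classical
  have hTfin : T.Finite := Set.finite_of_ncard_ne_zero (by omega)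
  have hex : ∀ K : (G.induce (Sᶜ : Set V)).ConnectedComponent,
      ∃ t, t ∈ T ∧ ∃ ht : t ∈ (Sᶜ : Set V),
        (G.induce (Sᶜ : Set V)).connectedComponentMk ⟨t, ht⟩ = K := by
    intro K
    obtain ⟨⟨u, hu⟩, hK⟩ := Quot.exists_rep K
    obtain ⟨t, htT, hx, hy, hreach⟩ := hr u hu
    exact ⟨t, htT, hy, by
      rw [← hK]
      exact SimpleGraph.ConnectedComponent.sound hreach.symm⟩
  choose ψ hψT hψmem hψmk using hex
  have hinj : Function.Injective ψ := by
    intro K K' h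
    rw [← hψmk K, ← hψmk K']
    congr 1
    exact Subtype.ext h
  have hrange : Set.range ψ = T := by
    apply Set.eq_of_subset_of_ncard_le
    · rintro _ ⟨K, rfl⟩; exact hψT K
    · have h1 : (Set.range ψ).ncard = 3 := by
        rw [← Nat.card_coe_set_eq, Nat.card_range_of_injective hinj, h3]
      rw [h1, hT]
    · exact hTfin
  have hsurj : ∀ t ∈ T, ∃ K, ψ K = t := by
    intro t ht
    rw [← hrange] at ht; exact ht
  constructor
  · intro t ht
    obtain ⟨K, rfl⟩ := hsurj t ht
    exact hψmem K
  · rintro t ht t' ht' hne ⟨hx, hy, hreach⟩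
    obtain ⟨K, rfl⟩ := hsurj t ht
    obtain ⟨K', rfl⟩ := hsurj t' ht'
    apply hne
    congr 1
    rw [← hψmk K, ← hψmk K']
    exact SimpleGraph.ConnectedComponent.sound hreach

lemma mem_three {S : Set V} (h : S.ncard = 3) {a : V} (ha : a ∈ S) :
    ∃ x y, a ≠ x ∧ a ≠ y ∧ x ≠ y ∧ S = {a, x, y} := by
  obtain ⟨p, q, r, hpq, hpr, hqr, rfl⟩ := Set.ncard_eq_three.mp h
  simp only [Set.mem_insert_iff, Set.mem_singleton_iff] at ha
  rcases ha with rfl | rfl | rfl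
  · exact ⟨q, r, hpq, hpr, hqr, rfl⟩
  · exact ⟨p, r, hpq.symm, hqr, hpr, by ext z; simp; tauto⟩
  · exact ⟨p, q, hpr.symm, hqr.symm, hpq, by ext z; simp; tauto⟩

lemma exists_pair {T : Set V} (hT : T.ncard = 3) {t : V} (ht : t ∈ T) :
    ∃ u v, u ∈ T ∧ v ∈ T ∧ t ≠ u ∧ t ≠ v ∧ u ≠ v := by
  obtain ⟨u, v, htu, htv, huv, hTeq⟩ := mem_three hT ht
  refine ⟨u, v, ?_, ?_, htu, htv, huv⟩ <;> rw [hTeq] <;> simp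

/-- In a triconnected graph, every vertex of `S = {a,x,y}` has a neighbour in
every connected component of `G − S` (provided there are at least two of them). -/
lemma nbr_fact [Fintype V] {G : SimpleGraph V} (htri : IsTriconnected G)
    {S : Set V} {a x y : V} (hSeq : S = {a, x, y})
    {p q : V} (hp : p ∉ S) (hq : q ∉ S) (hpq : ¬ ReachOutside G S p q)
    {w : V} (hw : w = x ∨ w = y) :
    ∃ m, ReachOutside G S p m ∧ G.Adj m w := by
  by_contra hno
  push_neg at hno
  have hsub : S \ {w} ⊆ S := Set.diff_subset
  have hbound : ∀ b c : V, S \ {w} ⊆ ({b, c} : Set V) → (S \ {w}).ncard ≤ 2 := by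
    intro b c hsub2
    calc (S \ {w}).ncard ≤ ({b, c} : Set V).ncard :=
          Set.ncard_le_ncard hsub2 (Set.toFinite _)
      _ ≤ 2 := le_trans (Set.ncard_insert_le _ _) (by simp)
  have hR : (S \ {w} : Set V).ncard ≤ 2 := by
    rcases hw with rfl | rfl
    · refine hbound a y ?_
      intro z hz
      obtain ⟨hzS, hzw⟩ := hz
      rw [hSeq] at hzS
      simp only [Set.mem_insert_iff, Set.mem_singleton_iff] at hzS hzw ⊢
      tauto
    · refine hbound a x ?_
      intro z hz
      obtain ⟨hzS, hzw⟩ := hz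
      rw [hSeq] at hzS
      simp only [Set.mem_insert_iff, Set.mem_singleton_iff] at hzS hzw ⊢
      tauto
  have hconn := htri.2 (S \ {w}) hR
  have hp' : p ∈ ((S \ {w})ᶜ : Set V) := fun h => hp h.1
  have hq' : q ∈ ((S \ {w})ᶜ : Set V) := fun h => hq h.1
  have hreach : ReachAvoid G (S \ {w}) p q :=
    reachOutside_iff.mp ⟨hp', hq', hconn.preconnected ⟨p, hp'⟩ ⟨q, hq'⟩⟩
  have hA : ∀ z ∈ {z | ReachOutside G S p z}, ∀ z', G.Adj z z' →
      z' ∈ S \ {w} ∨ z' ∈ {z | ReachOutside G S p z} := by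
    intro z hz z' hadj
    by_cases hz'S : z' ∈ S
    · by_cases hz'w : z' = w
      · subst hz'w
        exact absurd hadj (hno z hz)
      · exact Or.inl ⟨hz'S, hz'w⟩
    · refine Or.inr (reachOutside_trans hz ?_)
      exact reachOutside_of_reachAvoid
        (ReachAvoid.of_adj hadj (reachOutside_not_right hz) hz'S)
  have hpA : p ∈ {z | ReachOutside G S p z} :=
    ⟨hp, hp, SimpleGraph.Reachable.refl _⟩
  exact hpq (reachAvoid_closure hA hreach hpA)

/-- Go from `p` to `w ∈ {x,y}` entirely inside the component of `p` (plus `w`),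
avoiding `S'`. -/
lemma bridge {G : SimpleGraph V} {S S' : Set V} {p w m : V}
    (hm : ReachOutside G S p m) (hadj : G.Adj m w)
    (hclean : ∀ z, ReachOutside G S p z → z ∉ S') (hw : w ∉ S') :
    ReachAvoid G S' p w := by
  obtain ⟨wk, hwk⟩ := reachOutside_iff.mp hm
  have hpA : p ∈ {z | ReachOutside G S p z} :=
    ⟨reachOutside_not_left hm, reachOutside_not_left hm, SimpleGraph.Reachable.refl _⟩
  have hsup := walk_support_subset comp_closed wk hwk hpA
  have h1 : ReachAvoid G S' p m := ⟨wk, fun z hz => hclean z (hsup z hz)⟩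
  exact h1.trans (ReachAvoid.of_adj hadj (hclean m hm) hw)

/-- The `t`-side of the key argument: some `w ∈ {x,y}` is adjacent to the
component of `t` in `G − (S ∪ {s'})`. -/
lemma t_side [Fintype V] {G : SimpleGraph V} (htri : IsTriconnected G)
    {S : Set V} {a x y s' t u : V} (hSeq : S = {a, x, y})
    (hs'S : s' ∉ S) (hs'a : s' ≠ a)
    (htS : t ∉ S) (hts' : t ≠ s') (huS : u ∉ S) (hus' : u ≠ s')
    (hsep : ¬ ReachOutside G S t u) :
    ∃ w, (w = x ∨ w = y) ∧ ∃ k, ReachAvoid G (S ∪ {s'}) t k ∧ G.Adj k w := by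
  classical
  by_contra hno
  push_neg at hno
  set A : Set V := {z | ReachAvoid G (S ∪ {s'}) t z} with hAdef
  have htA : t ∈ A := ReachAvoid.refl (by
    intro h
    rcases h with h | h
    · exact htS h
    · exact hts' h)
  have hA : ∀ z ∈ A, ∀ z', G.Adj z z' → z' ∈ ({a, s'} : Set V) ∨ z' ∈ A := by
    intro z hz z' hadj
    by_cases hz'a : z' = a
    · exact Or.inl (by simp [hz'a])
    by_cases hz's : z' = s'
    · exact Or.inl (by simp [hz's])
    by_cases hz'S : z' ∈ S
    · exfalso
      rw [hSeq] at hz'S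
      simp only [Set.mem_insert_iff, Set.mem_singleton_iff] at hz'S
      rcases hz'S with rfl | h | h
      · exact hz'a rfl
      · exact hno z' (Or.inl h) z hz hadj
      · exact hno z' (Or.inr h) z hz hadj
    · refine Or.inr (hz.trans (ReachAvoid.of_adj hadj hz.not_right ?_))
      intro h
      rcases h with h | h
      · exact hz'S h
      · exact hz's h
  have hcard : ({a, s'} : Set V).ncard ≤ 2 :=
    le_trans (Set.ncard_insert_le _ _) (by simp)
  have hconn := htri.2 {a, s'} hcard
  have haS : a ∈ S := by rw [hSeq]; simp
  have ht' : t ∈ (({a, s'} : Set V)ᶜ : Set V) := by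
    intro h; rcases h with h | h
    · exact htS (h ▸ haS)
    · exact hts' h
  have hu' : u ∈ (({a, s'} : Set V)ᶜ : Set V) := by
    intro h; rcases h with h | h
    · exact huS (h ▸ haS)
    · exact hus' h
  have hreach : ReachAvoid G ({a, s'} : Set V) t u :=
    reachOutside_iff.mp ⟨ht', hu', hconn.preconnected ⟨t, ht'⟩ ⟨u, hu'⟩⟩
  have huA : u ∈ A := reachAvoid_closure hA hreach htA
  exact hsep (reachOutside_of_reachAvoid (huA.mono Set.subset_union_left))

/-- Main step: any element of `S'` other than `a` belongs to `S`. -/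
lemma subord_mem [Fintype V] {G : SimpleGraph V} (htri : IsTriconnected G)
    {T S S' : Set V} {a x y : V}
    (hSeq : S = {a, x, y}) (hax : a ≠ x) (hay : a ≠ y) (hxy : x ≠ y)
    (hS'card : S'.ncard = 3) (haS' : a ∈ S')
    (hTcard : T.ncard = 3)
    (hTS : ∀ t ∈ T, t ∉ S)
    (hsepS : ∀ t ∈ T, ∀ t' ∈ T, t ≠ t' → ¬ ReachOutside G S t t')
    (hTS' : ∀ t ∈ T, t ∉ S')
    (hsepS' : ∀ t ∈ T, ∀ t' ∈ T, t ≠ t' → ¬ ReachOutside G S' t t')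
    (hreachS : ∀ u, u ∉ S → ∃ t ∈ T, ReachOutside G S u t)
    {s' : V} (hs' : s' ∈ S') (hsa : s' ≠ a) : s' ∈ S := by
  classical
  by_contra hsS
  have haS : a ∈ S := by rw [hSeq]; simp
  have hxS : x ∈ S := by rw [hSeq]; simp
  have hyS : y ∈ S := by rw [hSeq]; simp
  have hs'T : s' ∉ T := fun h => hTS' s' h hs'
  obtain ⟨t, htT, hst⟩ := hreachS s' hsS
  obtain ⟨u0, v0, hu0T, hv0T, htu0, htv0, hu0v0⟩ := exists_pair hTcard htT
  -- the third element r' of S'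
  obtain ⟨c, d, hac, had, hcd, hS'eq0⟩ := mem_three hS'card haS'
  have hscd : s' = c ∨ s' = d := by
    rw [hS'eq0] at hs'
    simpa [hsa] using hs'
  obtain ⟨r', har', hs'r', hS'eq⟩ :
      ∃ r', a ≠ r' ∧ s' ≠ r' ∧ S' = {a, s', r'} := by
    rcases hscd with rfl | rfl
    · exact ⟨d, had, hcd, hS'eq0⟩
    · exact ⟨c, hac, fun h => hcd h.symm, by rw [hS'eq0, Set.pair_comm c s']⟩
  have hr'S' : r' ∈ S' := by rw [hS'eq]; simp
  have hr'T : r' ∉ T := fun h => hTS' r' h hr'S'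
  -- generic facts
  have hTnotS' : ∀ z ∈ T, z ∉ S' := hTS'
  have hts' : t ≠ s' := fun h => hs'T (h ▸ htT)
  have htr' : t ≠ r' := fun h => hr'T (h ▸ htT)
  -- cleanliness helper: if neither s' nor r' is in the component of p, then
  -- that component avoids S'
  have hclean : ∀ p, p ∉ S → ¬ ReachOutside G S p s' → ¬ ReachOutside G S p r' →
      ∀ z, ReachOutside G S p z → z ∉ S' := by
    intro p hp hps hpr z hz hzS'
    rw [hS'eq] at hzS'
    simp only [Set.mem_insert_iff, Set.mem_singleton_iff] at hzS'
    rcases hzS' with rfl | rfl | rfl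
    · exact (reachOutside_not_right hz) haS
    · exact hps hz
    · exact hpr hz
  -- two distinct components reaching a common w ∈ {x,y} give a contradiction
  have hcontra : ∀ p ∈ T, ∀ q ∈ T, p ≠ q →
      ∀ w, (w = x ∨ w = y) → w ∉ S' →
      (∀ z, ReachOutside G S p z → z ∉ S') →
      (∀ z, ReachOutside G S q z → z ∉ S') → False := by
    intro p hp q hq hpqne w hw hwS' hcp hcq
    obtain ⟨m1, hm1, hadj1⟩ := nbr_fact htri hSeq (hTS p hp) (hTS q hq)
      (hsepS p hp q hq hpqne) hw
    obtain ⟨m2, hm2, hadj2⟩ := nbr_fact htri hSeq (hTS q hq) (hTS p hp)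
      (hsepS q hq p hp (Ne.symm hpqne)) hw
    have h1 : ReachAvoid G S' p w := bridge hm1 hadj1 hcp hwS'
    have h2 : ReachAvoid G S' q w := bridge hm2 hadj2 hcq hwS'
    exact hsepS' p hp q hq hpqne (reachOutside_of_reachAvoid (h1.trans h2.symm))
  -- basic reachability bookkeeping
  have hst' : ReachOutside G S t s' := reachOutside_symm hst
  have hcompdisj : ∀ p ∈ T, ∀ q ∈ T, p ≠ q → ∀ z,
      ReachOutside G S p z → ¬ ReachOutside G S q z :=
    fun p hp q hq hne z h1 h2 =>
      hsepS p hp q hq hne (reachOutside_trans h1 (reachOutside_symm h2))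
  have hTeq : T = {t, u0, v0} := by
    refine (Set.eq_of_subset_of_ncard_le ?_ ?_ (Set.toFinite _)).symm
    · intro z hz
      simp only [Set.mem_insert_iff, Set.mem_singleton_iff] at hz
      rcases hz with rfl | rfl | rfl
      · exact htT
      · exact hu0T
      · exact hv0T
    · rw [hTcard, Set.ncard_eq_three.mpr ⟨t, u0, v0, htu0, htv0, hu0v0, rfl⟩]
  -- now the case analysis on r'
  by_cases hr'Smem : r' ∈ S
  case pos =>
    -- r' is x or y; let w be the other one
    have hr'xy : r' = x ∨ r' = y := by
      rw [hSeq] at hr'Smem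
      simp only [Set.mem_insert_iff, Set.mem_singleton_iff] at hr'Smem
      rcases hr'Smem with rfl | h | h
      · exact absurd rfl har'
      · exact Or.inl h
      · exact Or.inr h
    obtain ⟨w, hw, hwr'⟩ : ∃ w, (w = x ∨ w = y) ∧ w ≠ r' := by
      rcases hr'xy with rfl | rfl
      · exact ⟨y, Or.inr rfl, fun h => hxy h.symm⟩
      · exact ⟨x, Or.inl rfl, hxy⟩
    have hwS : w ∈ S := by
      rcases hw with rfl | rfl
      · exact hxS
      · exact hyS
    have hwS' : w ∉ S' := by
      rw [hS'eq]
      simp only [Set.mem_insert_iff, Set.mem_singleton_iff]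
      push_neg
      refine ⟨?_, fun h => hsS (h ▸ hwS), hwr'⟩
      rintro rfl
      rcases hw with rfl | rfl
      · exact hax rfl
      · exact hay rfl
    have hcu : ∀ z, ReachOutside G S u0 z → z ∉ S' :=
      hclean u0 (hTS u0 hu0T)
        (hcompdisj t htT u0 hu0T htu0 s' hst')
        (fun h => (reachOutside_not_right h) hr'Smem)
    have hcv : ∀ z, ReachOutside G S v0 z → z ∉ S' :=
      hclean v0 (hTS v0 hv0T)
        (hcompdisj t htT v0 hv0T htv0 s' hst')
        (fun h => (reachOutside_not_right h) hr'Smem)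
    exact hcontra u0 hu0T v0 hv0T hu0v0 w hw hwS' hcu hcv
  case neg =>
    -- the generic "t-side" contradiction, when r' lies in the component of some
    -- u ∈ T \ {t}
    have inner : ∀ u v, u ∈ T → v ∈ T → t ≠ u → t ≠ v → u ≠ v →
        ReachOutside G S r' u → False := by
      intro u v huT hvT htu htv huv hru
      have hus' : u ≠ s' := fun h => hs'T (h ▸ huT)
      obtain ⟨w, hw, k, hwalk, hadj⟩ := t_side htri hSeq hsS hsa
        (hTS t htT) hts' (hTS u huT) hus' (hsepS t htT u huT htu)
      have hwS : w ∈ S := by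
        rcases hw with rfl | rfl
        · exact hxS
        · exact hyS
      have hwS' : w ∉ S' := by
        rw [hS'eq]
        simp only [Set.mem_insert_iff, Set.mem_singleton_iff]
        push_neg
        refine ⟨?_, ?_, ?_⟩
        · rintro rfl
          rcases hw with rfl | rfl
          · exact hax rfl
          · exact hay rfl
        · rintro rfl; exact hsS hwS
        · rintro rfl; exact hr'Smem hwS
      obtain ⟨wk, hwk⟩ := hwalk
      have htA : t ∈ {z | ReachOutside G S t z} :=
        ⟨hTS t htT, hTS t htT, SimpleGraph.Reachable.refl _⟩
      have hsupp := walk_support_subset (comp_closed (p := t)) wk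
        (fun z hz hzS => hwk z hz (Or.inl hzS)) htA
      have hsuppS' : ∀ z ∈ wk.support, z ∉ S' := by
        intro z hz hzS'
        rw [hS'eq] at hzS'
        simp only [Set.mem_insert_iff, Set.mem_singleton_iff] at hzS'
        rcases hzS' with rfl | rfl | rfl
        · exact hwk z hz (Or.inl haS)
        · exact hwk z hz (Or.inr rfl)
        · exact hcompdisj t htT u huT htu z (hsupp z hz) (reachOutside_symm hru)
      have h1 : ReachAvoid G S' t k := ⟨wk, hsuppS'⟩
      have h2 : ReachAvoid G S' t w :=
        h1.trans (ReachAvoid.of_adj hadj (hsuppS' k wk.end_mem_support) hwS')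
      have hcleanv : ∀ z, ReachOutside G S v z → z ∉ S' :=
        hclean v (hTS v hvT)
          (hcompdisj t htT v hvT htv s' hst')
          (hcompdisj u huT v hvT huv r' (reachOutside_symm hru))
      obtain ⟨m, hm, hadjm⟩ := nbr_fact htri hSeq (hTS v hvT) (hTS t htT)
        (hsepS v hvT t htT (Ne.symm htv)) hw
      have h3 : ReachAvoid G S' v w := bridge hm hadjm hcleanv hwS'
      exact hsepS' t htT v hvT htv (reachOutside_of_reachAvoid (h2.trans h3.symm))
    obtain ⟨q, hqT, hrq⟩ := hreachS r' hr'Smem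
    have hq3 : q = t ∨ q = u0 ∨ q = v0 := by
      rw [hTeq] at hqT
      simpa using hqT
    rcases hq3 with hqe | hqe | hqe
    · -- r' in the component of t
      have hrt' : ReachOutside G S t r' := reachOutside_symm (by rw [← hqe]; exact hrq)
      have hxS' : x ∉ S' := by
        rw [hS'eq]
        simp only [Set.mem_insert_iff, Set.mem_singleton_iff]
        push_neg
        exact ⟨fun h => hax h.symm, fun h => hsS (h ▸ hxS), fun h => hr'Smem (h ▸ hxS)⟩
      have hcu : ∀ z, ReachOutside G S u0 z → z ∉ S' :=
        hclean u0 (hTS u0 hu0T)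
          (hcompdisj t htT u0 hu0T htu0 s' hst')
          (hcompdisj t htT u0 hu0T htu0 r' hrt')
      have hcv : ∀ z, ReachOutside G S v0 z → z ∉ S' :=
        hclean v0 (hTS v0 hv0T)
          (hcompdisj t htT v0 hv0T htv0 s' hst')
          (hcompdisj t htT v0 hv0T htv0 r' hrt')
      exact hcontra u0 hu0T v0 hv0T hu0v0 x (Or.inl rfl) hxS' hcu hcv
    · exact inner u0 v0 hu0T hv0T htu0 htv0 hu0v0 (by rw [← hqe]; exact hrq)
    · exact inner v0 u0 hv0T hu0T htv0 htu0 (Ne.symm hu0v0) (by rw [← hqe]; exact hrq)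

theorem stmt_16 [Fintype V] (G : SimpleGraph V)
    (htri : IsTriconnected G) (hbig : 6 < Fintype.card V)
    (T : Set V) (hT : IsThreeCutset G T)
    (a : V) (ha : IsCompOutside G T {a})
    (S S' : Set V) (hS : IsThreeCutset G S) (hS' : IsThreeCutset G S')
    (haS : a ∈ S)
    (hS3 : Nat.card (G.induce (Sᶜ : Set V)).ConnectedComponent = 3)
    (hsubS : ∀ C : Set V, IsCompOutside G S C → (C ∩ T).Nonempty)
    (haS' : a ∈ S')
    (hS'3 : Nat.card (G.induce (S'ᶜ : Set V)).ConnectedComponent = 3)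
    (hsubS' : ∀ C : Set V, IsCompOutside G S' C → (C ∩ T).Nonempty) :
    S = S' := by
  classical
  have hreachS : ∀ u, u ∉ S → ∃ t ∈ T, ReachOutside G S u t := by
    intro u hu
    obtain ⟨c, hc1, hc2⟩ := hsubS (compOutside G S u) ⟨u, hu, rfl⟩
    exact ⟨c, hc2, hc1⟩
  have hreachS' : ∀ u, u ∉ S' → ∃ t ∈ T, ReachOutside G S' u t := by
    intro u hu
    obtain ⟨c, hc1, hc2⟩ := hsubS' (compOutside G S' u) ⟨u, hu, rfl⟩
    exact ⟨c, hc2, hc1⟩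
  obtain ⟨hTS, hsepS⟩ := key_sep hT.1 hS3 hreachS
  obtain ⟨hTS', hsepS'⟩ := key_sep hT.1 hS'3 hreachS'
  obtain ⟨x, y, hax, hay, hxy, hSeq⟩ := mem_three hS.1 haS
  have hsub : S' ⊆ S := by
    intro s' hs'
    by_cases h : s' = a
    · exact h ▸ haS
    · exact subord_mem htri hSeq hax hay hxy hS'.1 haS' hT.1 hTS hsepS hTS' hsepS'
        hreachS hs' h
  exact (Set.eq_of_subset_of_ncard_le hsub (by rw [hS.1, hS'.1]) (Set.toFinite _)).symm

end Paper
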